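/- For 0 < α < 1, m > 1/α, and 1 ≤ k ≤ j, the interpolation error term R_k^j = -(α/Γ(1-α)) ∫_{k-1}^{k} (q(s)-Q(s))/(j-s)^{α+1} ds satisfies R_k^j ≤ a_{j-k} ∫_{k-1}^{k} (k^{mα-1} - μ^{mα-1}) / (Γ(2-α)Γ(mα)) dμ, where q(t) = t^{mα}/Γ(1+mα) and Q is its piecewise linear interpolant on integer nodes. -/

import Mathlib

open Real intervalIntegral MeasureTheory Set

-- pointwise: x / x^(α+1) = x^(-α) for x ≥ 0, 0 < α
lemma aux_div {α : ℝ} (hα : 0 < α) {x : ℝ} (hx : 0 ≤ x) :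
    x / x ^ (α + 1) = x ^ (-α) := by
  rcases eq_or_lt_of_le hx with h | h
  · rw [← h, Real.zero_rpow (by positivity), Real.zero_rpow (by simpa using hα.ne'), zero_div]
  · have h1 : x ^ (α + 1) = x ^ α * x := by
      rw [Real.rpow_add h, Real.rpow_one]
    have h2 : x ^ (-α) = (x ^ α)⁻¹ := by rw [Real.rpow_neg hx]
    have h3 : x ^ α ≠ 0 := (Real.rpow_pos_of_pos h α).ne'
    rw [h1, h2]
    field_simp


-- integrability of the weight function
lemma aux_int {α : ℝ} (hα0 : 0 < α) (hα1 : α < 1) (A : ℝ) (i : ℕ) :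
    IntervalIntegrable
      (fun s => ((A + 1) - s) / ((A + 1 + (i : ℝ)) - s) ^ (α + 1)) volume A (A + 1) := by
  rcases Nat.eq_zero_or_pos i with hi | hi
  · subst hi
    have hbase : IntervalIntegrable (fun x : ℝ => ((A + 1) - x) ^ (-α)) volume A (A + 1) := by
      have := (intervalIntegrable_rpow' (a := 1) (b := 0) (r := -α) (by linarith)).comp_sub_left
        (A + 1)
      norm_num at this
      exact this
    rw [intervalIntegrable_iff_integrableOn_Ioc_of_le (by linarith)] at hbase ⊢
    refine hbase.congr_fun (fun s hs => ?_) measurableSet_Ioc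
    have hs2 : 0 ≤ A + 1 - s := by linarith [hs.2]
    push_cast
    rw [add_zero, ← aux_div hα0 hs2]
  · have hi1 : (1 : ℝ) ≤ (i : ℝ) := by exact_mod_cast hi
    apply ContinuousOn.intervalIntegrable
    apply ContinuousOn.div
    · fun_prop
    · apply ContinuousOn.rpow_const (by fun_prop)
      intro x hx
      rw [uIcc_of_le (by linarith)] at hx
      left
      have : 0 < A + 1 + (i : ℝ) - x := by have := hx.2; linarith
      linarith
    · intro x hx
      rw [uIcc_of_le (by linarith)] at hx
      have : 0 < A + 1 + (i : ℝ) - x := by have := hx.2; linarith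
      exact (Real.rpow_pos_of_pos this _).ne'


-- the key weight bound
lemma aux_bound {α : ℝ} (hα0 : 0 < α) (hα1 : α < 1) (A : ℝ) (i : ℕ) :
    α * ∫ s in A..(A + 1), ((A + 1) - s) / ((A + 1 + (i : ℝ)) - s) ^ (α + 1)
      ≤ (((i : ℝ) + 1) ^ (1 - α) - (i : ℝ) ^ (1 - α)) / (1 - α) := by
  rcases Nat.eq_zero_or_pos i with hi | hi
  · subst hi
    have hval : (∫ s in A..(A + 1), ((A + 1) - s) / ((A + 1 + ((0:ℕ) : ℝ)) - s) ^ (α + 1))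
        = 1 / (1 - α) := by
      have h1 : (∫ s in A..(A + 1), ((A + 1) - s) / ((A + 1 + ((0:ℕ) : ℝ)) - s) ^ (α + 1))
          = ∫ s in A..(A + 1), ((A + 1) - s) ^ (-α) := by
        apply intervalIntegral.integral_congr
        intro s hs
        rw [uIcc_of_le (by linarith)] at hs
        have hs2 : 0 ≤ A + 1 - s := by linarith [hs.2]
        push_cast
        rw [add_zero, aux_div hα0 hs2]
      rw [h1]
      have h2 := intervalIntegral.integral_comp_sub_left (a := A) (b := A + 1)
        (fun x : ℝ => x ^ (-α)) (A + 1)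
      norm_num at h2
      rw [h2, integral_rpow (Or.inl (by linarith))]
      rw [show -α + 1 = 1 - α by ring, Real.one_rpow, Real.zero_rpow (by linarith)]
      norm_num
    rw [hval, mul_one_div]
    push_cast
    rw [zero_add, Real.one_rpow, Real.zero_rpow (by linarith), sub_zero]
    gcongr
    all_goals linarith
  · -- i ≥ 1 : fundamental theorem of calculus
    have hi1 : (1 : ℝ) ≤ (i : ℝ) := by exact_mod_cast hi
    have h1α : (0:ℝ) < 1 - α := by linarith
    set J : ℝ := A + 1 + (i : ℝ) with hJ
    set H : ℝ → ℝ := fun s => ((A + 1) - s) * (J - s) ^ (-α) - (J - s) ^ (1 - α) / (1 - α)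
      with hH
    have hderiv : ∀ s ∈ uIcc A (A + 1),
        HasDerivAt H (α * (((A + 1) - s) / (J - s) ^ (α + 1))) s := by
      intro s hs
      rw [uIcc_of_le (by linarith)] at hs
      have hpos : 0 < J - s := by
        have := hs.2; rw [hJ]; linarith
      have hsub : HasDerivAt (fun x : ℝ => J - x) (-1) s := (hasDerivAt_id s).const_sub J
      have hsub2 : HasDerivAt (fun x : ℝ => (A + 1) - x) (-1) s :=
        (hasDerivAt_id s).const_sub (A + 1)
      have h2 := hsub.rpow_const (p := -α) (Or.inl hpos.ne')
      have h5 := hsub.rpow_const (p := 1 - α) (Or.inl hpos.ne')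
      have h4 := (hsub2.mul h2).sub (h5.div_const (1 - α))
      refine h4.congr_deriv ?_
      have e1 : (1 : ℝ) - α - 1 = -α := by ring
      have e2 : -α - 1 = -(α + 1) := by ring
      rw [e1, e2, Real.rpow_neg hpos.le (α + 1), Real.rpow_neg hpos.le α]
      have hadd : (J - s) ^ (α + 1) = (J - s) ^ α * (J - s) := by
        rw [Real.rpow_add hpos, Real.rpow_one]
      have hne : (J - s) ^ α ≠ 0 := (Real.rpow_pos_of_pos hpos α).ne'
      rw [hadd]
      field_simp
      ring
    have hint : IntervalIntegrable
        (fun s => α * (((A + 1) - s) / ((A + 1 + (i : ℝ)) - s) ^ (α + 1))) volume A (A + 1) :=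
      (aux_int hα0 hα1 A i).const_mul α
    have hftc := intervalIntegral.integral_eq_sub_of_hasDerivAt hderiv (by rw [hJ]; exact hint)
    rw [intervalIntegral.integral_const_mul] at hftc
    rw [hftc]
    have e3 : J - (A + 1) = (i : ℝ) := by rw [hJ]; ring
    have e4 : J - A = (i : ℝ) + 1 := by rw [hJ]; ring
    have hHB : H (A + 1) = -((i : ℝ) ^ (1 - α) / (1 - α)) := by
      simp only [hH]; rw [e3]; ring
    have hHA : H A = ((i : ℝ) + 1) ^ (-α) - ((i : ℝ) + 1) ^ (1 - α) / (1 - α) := by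
      simp only [hH]; rw [e4]; ring
    rw [hHB, hHA]
    have hnn : 0 ≤ ((i : ℝ) + 1) ^ (-α) := Real.rpow_nonneg (by linarith) _
    rw [sub_div]
    linarith

theorem stmt_14 (α : ℝ) (hα0 : 0 < α) (hα1 : α < 1)
    (m : ℕ) (hmα : 1 < (m : ℝ) * α)
    (a : ℕ → ℝ) (ha : ∀ i : ℕ, a i = ((i : ℝ) + 1) ^ (1 - α) - (i : ℝ) ^ (1 - α))
    (q : ℝ → ℝ) (hq : ∀ t : ℝ, q t = t ^ ((m : ℝ) * α) / Real.Gamma (1 + (m : ℝ) * α))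
    (Q : ℝ → ℝ)
    (hQ : ∀ k : ℕ, ∀ t ∈ Set.Icc ((k : ℝ)) ((k : ℝ) + 1),
      Q t = q k + (q ((k : ℕ) + 1) - q k) * (t - k)) :
    ∀ k j : ℕ, 1 ≤ k → k ≤ j →
      -(α / Real.Gamma (1 - α)) *
          ∫ s in ((k : ℝ) - 1)..(k : ℝ), (q s - Q s) / ((j : ℝ) - s) ^ (α + 1)
        ≤ a (j - k) *
          ∫ μ in ((k : ℝ) - 1)..(k : ℝ),
            ((k : ℝ) ^ ((m : ℝ) * α - 1) - μ ^ ((m : ℝ) * α - 1)) /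
              (Real.Gamma (2 - α) * Real.Gamma ((m : ℝ) * α)) := by
  intro k j hk hkj
  obtain ⟨k, rfl⟩ : ∃ k', k = k' + 1 := ⟨k - 1, (Nat.succ_pred_eq_of_pos hk).symm⟩
  obtain ⟨i, rfl⟩ : ∃ i, j = k + 1 + i := ⟨j - (k + 1), by omega⟩
  simp only [show k + 1 + i - (k + 1) = i from by omega]
  push_cast
  simp only [show (k : ℝ) + 1 - 1 = (k : ℝ) from by ring]
  set β := (m : ℝ) * α with hβdef
  have hβ : 1 < β := hmα
  have hβ0 : 0 < β := by linarith
  have hA0 : (0:ℝ) ≤ (k : ℝ) := Nat.cast_nonneg k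
  have hi0 : (0:ℝ) ≤ (i : ℝ) := Nat.cast_nonneg i
  set c : ℝ := (Real.Gamma (1 + β))⁻¹ with hcdef
  have hΓβpos : 0 < Real.Gamma β := Real.Gamma_pos_of_pos hβ0
  have hG1 : Real.Gamma (1 + β) = β * Real.Gamma β := by
    rw [add_comm]; exact Real.Gamma_add_one hβ0.ne'
  have hcpos : 0 < c := by rw [hcdef, hG1]; exact inv_pos.mpr (mul_pos hβ0 hΓβpos)
  have hq' : ∀ t : ℝ, q t = c * t ^ β := fun t => by rw [hq t, hcdef]; ring
  have hΓ1pos : 0 < Real.Gamma (1 - α) := Real.Gamma_pos_of_pos (by linarith)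
  have hΓ2 : Real.Gamma (2 - α) = (1 - α) * Real.Gamma (1 - α) := by
    rw [show (2:ℝ) - α = (1 - α) + 1 by ring]
    exact Real.Gamma_add_one (by linarith)
  have hΓ2pos : 0 < Real.Gamma (2 - α) := by
    rw [hΓ2]; exact mul_pos (by linarith) hΓ1pos
  -- the Q formula on the interval
  have hQf : ∀ t ∈ Set.Icc ((k:ℝ)) ((k:ℝ) + 1),
      Q t = c * (k:ℝ) ^ β + (c * ((k:ℝ) + 1) ^ β - c * (k:ℝ) ^ β) * (t - (k:ℝ)) := by
    intro t ht
    have h := hQ k t ht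
    push_cast at h
    rw [h, hq' ((k:ℝ)), hq' ((k:ℝ) + 1)]
  -- the key constant
  set D : ℝ := β * c * ((k:ℝ) + 1) ^ (β - 1) - c * ((k:ℝ) + 1) ^ β + c * (k:ℝ) ^ β with hDdef
  -- the auxiliary function for the upper bound
  set h : ℝ → ℝ := fun s => (((k:ℝ) + 1) - s) * D + c * s ^ β -
      (c * (k:ℝ) ^ β + (c * ((k:ℝ) + 1) ^ β - c * (k:ℝ) ^ β) * (s - (k:ℝ))) with hh
  have hdAt : ∀ s : ℝ, HasDerivAt h
      ((-1) * D + c * (β * s ^ (β - 1)) -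
        (0 + (c * ((k:ℝ) + 1) ^ β - c * (k:ℝ) ^ β) * 1)) s := by
    intro s
    have h1 : HasDerivAt (fun s : ℝ => s ^ β) (β * s ^ (β - 1)) s :=
      Real.hasDerivAt_rpow_const (Or.inr hβ.le)
    have h2 := ((hasDerivAt_id s).const_sub ((k:ℝ) + 1)).mul_const D
    have h3 := HasDerivAt.const_mul c h1
    have h4 := HasDerivAt.const_mul (c * ((k:ℝ) + 1) ^ β - c * (k:ℝ) ^ β)
      ((hasDerivAt_id s).sub_const ((k:ℝ)))
    exact (h2.add h3).sub ((hasDerivAt_const s (c * (k:ℝ) ^ β)).add h4)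
  have hanti : AntitoneOn h (Set.Icc ((k:ℝ)) ((k:ℝ) + 1)) := by
    apply antitoneOn_of_deriv_nonpos (convex_Icc _ _)
    · exact (Differentiable.continuous fun s => (hdAt s).differentiableAt).continuousOn
    · exact fun x _ => (hdAt x).differentiableAt.differentiableWithinAt
    · intro x hx
      rw [interior_Icc] at hx
      rw [(hdAt x).deriv]
      have hx0 : 0 ≤ x := le_trans hA0 hx.1.le
      have hmono : x ^ (β - 1) ≤ ((k:ℝ) + 1) ^ (β - 1) :=
        Real.rpow_le_rpow hx0 (by linarith [hx.2]) (by linarith)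
      have hmul := mul_le_mul_of_nonneg_left hmono (show (0:ℝ) ≤ c * β by positivity)
      rw [hDdef]
      nlinarith [hmul]
  have hhB : h ((k:ℝ) + 1) = 0 := by simp only [hh]; ring
  have hhA : h ((k:ℝ)) = D := by simp only [hh]; ring
  have hmem1 : (k:ℝ) ∈ Set.Icc ((k:ℝ)) ((k:ℝ) + 1) := ⟨le_refl _, by linarith⟩
  have hmem2 : (k:ℝ) + 1 ∈ Set.Icc ((k:ℝ)) ((k:ℝ) + 1) := ⟨by linarith, le_refl _⟩
  have hD0 : 0 ≤ D := by
    have := hanti hmem1 hmem2 (by linarith)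
    rw [hhB, hhA] at this; exact this
  have hup : ∀ s ∈ Set.Icc ((k:ℝ)) ((k:ℝ) + 1), Q s - q s ≤ (((k:ℝ) + 1) - s) * D := by
    intro s hs
    have h1 := hanti hs hmem2 hs.2
    rw [hhB] at h1
    simp only [hh] at h1
    rw [hQf s hs, hq' s]
    linarith
  -- convexity lower bound
  have hlow : ∀ s ∈ Set.Icc ((k:ℝ)) ((k:ℝ) + 1), 0 ≤ Q s - q s := by
    intro s hs
    have hconv := convexOn_rpow (p := β) hβ.le
    have ht0 : 0 ≤ s - (k:ℝ) := by linarith [hs.1]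
    have ht1 : s - (k:ℝ) ≤ 1 := by linarith [hs.2]
    have h2 := hconv.2 (Set.mem_Ici.mpr hA0) (Set.mem_Ici.mpr (show (0:ℝ) ≤ (k:ℝ) + 1 by linarith))
      (show (0:ℝ) ≤ 1 - (s - (k:ℝ)) by linarith) ht0 (by ring)
    simp only [smul_eq_mul] at h2
    rw [show (1 - (s - (k:ℝ))) * (k:ℝ) + (s - (k:ℝ)) * ((k:ℝ) + 1) = s by ring] at h2
    have h3 := mul_le_mul_of_nonneg_left h2 hcpos.le
    rw [hQf s hs, hq' s]
    nlinarith [h3]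
  -- value of the RHS integral
  have hRHS : (∫ μ in (k:ℝ)..((k:ℝ) + 1),
      (((k:ℝ) + 1) ^ (β - 1) - μ ^ (β - 1)) / (Real.Gamma (2 - α) * Real.Gamma β))
      = D / Real.Gamma (2 - α) := by
    rw [intervalIntegral.integral_div]
    have hsub : (∫ μ in (k:ℝ)..((k:ℝ) + 1), (((k:ℝ) + 1) ^ (β - 1) - μ ^ (β - 1)))
        = ((k:ℝ) + 1) ^ (β - 1) - ((((k:ℝ) + 1) ^ β - (k:ℝ) ^ β) / β) := by
      rw [intervalIntegral.integral_sub intervalIntegrable_const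
        (intervalIntegrable_rpow' (by linarith))]
      rw [intervalIntegral.integral_const, integral_rpow (Or.inl (by linarith))]
      rw [show β - 1 + 1 = β by ring, show (k:ℝ) + 1 - (k:ℝ) = 1 by ring, one_smul]
    rw [hsub, hDdef, hcdef, hG1]
    have hβne : β ≠ 0 := hβ0.ne'
    have hΓβne : Real.Gamma β ≠ 0 := hΓβpos.ne'
    have hΓ2ne : Real.Gamma (2 - α) ≠ 0 := hΓ2pos.ne'
    field_simp
    ring
  rw [hRHS]
  -- flip the sign on the left
  have hfun : (fun s => (q s - Q s) / (((k:ℝ) + 1 + (i:ℝ)) - s) ^ (α + 1))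
      = (fun s => -((Q s - q s) / (((k:ℝ) + 1 + (i:ℝ)) - s) ^ (α + 1))) := by
    funext s; rw [← neg_div, neg_sub]
  rw [hfun, intervalIntegral.integral_neg, neg_mul_neg]
  -- compare with the majorant integral
  have hmain : (∫ s in (k:ℝ)..((k:ℝ) + 1),
        (Q s - q s) / (((k:ℝ) + 1 + (i:ℝ)) - s) ^ (α + 1))
      ≤ D * ∫ s in (k:ℝ)..((k:ℝ) + 1),
        (((k:ℝ) + 1) - s) / (((k:ℝ) + 1 + (i:ℝ)) - s) ^ (α + 1) := by
    rw [← intervalIntegral.integral_const_mul]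
    rw [intervalIntegral.integral_of_le (by linarith), intervalIntegral.integral_of_le (by linarith)]
    apply MeasureTheory.integral_mono_of_nonneg
    · filter_upwards [MeasureTheory.self_mem_ae_restrict measurableSet_Ioc] with s hs
      have hsIcc : s ∈ Set.Icc ((k:ℝ)) ((k:ℝ) + 1) := Set.Ioc_subset_Icc_self hs
      have h1 := hlow s hsIcc
      have h2 : (0:ℝ) ≤ (((k:ℝ) + 1 + (i:ℝ)) - s) ^ (α + 1) :=
        Real.rpow_nonneg (by linarith [hsIcc.2]) _
      exact div_nonneg h1 h2
    · exact ((aux_int hα0 hα1 (k:ℝ) i).const_mul D).1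
    · filter_upwards [MeasureTheory.self_mem_ae_restrict measurableSet_Ioc] with s hs
      have hsIcc : s ∈ Set.Icc ((k:ℝ)) ((k:ℝ) + 1) := Set.Ioc_subset_Icc_self hs
      have hub := hup s hsIcc
      have hwnn : (0:ℝ) ≤ (((k:ℝ) + 1 + (i:ℝ)) - s) ^ (α + 1) :=
        Real.rpow_nonneg (by linarith [hsIcc.2]) _
      rw [show D * ((((k:ℝ) + 1) - s) / (((k:ℝ) + 1 + (i:ℝ)) - s) ^ (α + 1))
            = (D * (((k:ℝ) + 1) - s)) / (((k:ℝ) + 1 + (i:ℝ)) - s) ^ (α + 1) from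
            (mul_div_assoc _ _ _).symm]
      exact div_le_div_of_nonneg_right (by linarith [hub]) hwnn
  -- put things together
  have hφb := aux_bound hα0 hα1 (k:ℝ) i
  calc (α / Real.Gamma (1 - α)) * ∫ s in (k:ℝ)..((k:ℝ) + 1),
        (Q s - q s) / (((k:ℝ) + 1 + (i:ℝ)) - s) ^ (α + 1)
      ≤ (α / Real.Gamma (1 - α)) * (D * ∫ s in (k:ℝ)..((k:ℝ) + 1),
        (((k:ℝ) + 1) - s) / (((k:ℝ) + 1 + (i:ℝ)) - s) ^ (α + 1)) :=
        mul_le_mul_of_nonneg_left hmain (div_nonneg hα0.le hΓ1pos.le)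
    _ = (D / Real.Gamma (1 - α)) * (α * ∫ s in (k:ℝ)..((k:ℝ) + 1),
        (((k:ℝ) + 1) - s) / (((k:ℝ) + 1 + (i:ℝ)) - s) ^ (α + 1)) := by ring
    _ ≤ (D / Real.Gamma (1 - α)) * (a i / (1 - α)) := by
        apply mul_le_mul_of_nonneg_left _ (div_nonneg hD0 hΓ1pos.le)
        rw [ha i]
        exact hφb
    _ = a i * (D / Real.Gamma (2 - α)) := by
        rw [hΓ2]
        have h1 : (1:ℝ) - α ≠ 0 := by linarith
        field_simp
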